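/- Let k be an algebraically closed field of characteristic 2 and let e ∈ sl_3(k) be a nonzero nilpotent matrix. Then there exist h, f ∈ sl_3(k) such that e and f are linearly independent, ⁅e,f⁆ = 0, ⁅h,e⁆ = e and ⁅h,f⁆ = f (that is, e extends to a pgl₂-triple) if and only if e² = 0, i.e., e is not a regular nilpotent element of sl_3(k). -/

import Mathlib

open LieAlgebra.SpecialLinear Module in
lemma charTwoAddSelf (k : Type*) [Field k] [CharP k 2] {M : Type*} [AddCommGroup M] [Module k M]
    (x : M) : x + x = 0 := by
  have h2 : (2:k) = 0 := by exact_mod_cast CharP.cast_eq_zero k 2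
  rw [← two_smul k x, h2, zero_smul]

open LieAlgebra.SpecialLinear Module in
lemma forward_dir (k : Type*) [Field k] [CharP k 2]
    (e : sl (Fin 3) k) (he : IsNilpotent e.val)
    (h f : sl (Fin 3) k) (hli : LinearIndependent k ![e, f])
    (hef : ⁅e, f⁆ = 0) (hhe : ⁅h, e⁆ = e) (hhf : ⁅h, f⁆ = f) :
    e.val ^ 2 = 0 := by
  classical
  by_contra hsq
  -- cube is zero
  have he3 : e.val ^ 3 = 0 := by
    have hcp := Matrix.isNilpotent_charpoly_sub_pow_of_isNilpotent he
    have h0 : e.val.charpoly = Polynomial.X ^ 3 := by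
      have := hcp.eq_zero; rw [sub_eq_zero] at this; simpa using this
    have := e.val.aeval_self_charpoly
    rw [h0] at this; simpa using this
  let φ := (Matrix.toLinAlgEquiv' : Matrix (Fin 3) (Fin 3) k ≃ₐ[k] _)
  let E := φ e.val
  let F := φ f.val
  let H := φ h.val
  have hE3 : E * E * E = 0 := by
    show φ e.val * φ e.val * φ e.val = 0
    rw [← _root_.map_mul, ← _root_.map_mul, show e.val*e.val*e.val = e.val^3 by rw [pow_succ, pow_two], he3, map_zero]
  have hE2 : E * E ≠ 0 := by
    show φ e.val * φ e.val ≠ 0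
    rw [← _root_.map_mul, show e.val*e.val = e.val^2 by rw [pow_two]]
    intro hc
    exact hsq (φ.injective (by rw [hc, map_zero]))
  have hEF : E * F = F * E := by
    have h1 : e.val * f.val - f.val * e.val = 0 := by
      have := congrArg Subtype.val hef; simpa [sl_bracket, Ring.lie_def] using this
    have := congrArg φ (sub_eq_zero.mp h1)
    show φ e.val * φ f.val = φ f.val * φ e.val
    rw [← _root_.map_mul, ← _root_.map_mul, this]
  have hHE : H * E - E * H = E := by
    have h1 : h.val * e.val - e.val * h.val = e.val := congrArg Subtype.val hhe
    have := congrArg φ h1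
    show φ h.val * φ e.val - φ e.val * φ h.val = φ e.val
    rw [← _root_.map_mul, ← _root_.map_mul, ← map_sub, this]
  have hHF : H * F - F * H = F := by
    have h1 : h.val * f.val - f.val * h.val = f.val := congrArg Subtype.val hhf
    have := congrArg φ h1
    show φ h.val * φ f.val - φ f.val * φ h.val = φ f.val
    rw [← _root_.map_mul, ← _root_.map_mul, ← map_sub, this]
  have hEdef : E = φ e.val := rfl
  have hFdef : F = φ f.val := rfl
  clear_value E F H
  -- a vector with E (E v) ≠ 0
  obtain ⟨v, hv⟩ : ∃ v, E (E v) ≠ 0 := by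
    by_contra hc
    push_neg at hc
    exact hE2 (LinearMap.ext fun u => by simpa [Module.End.mul_apply] using hc u)
  have h3 : ∀ u, E (E (E u)) = 0 := fun u => by
    have := congrFun (congrArg DFunLike.coe hE3) u
    simpa [Module.End.mul_apply] using this
  -- basis
  have hli3 : LinearIndependent k ![v, E v, E (E v)] := by
    rw [Fintype.linearIndependent_iff]
    intro g hg
    rw [Fin.sum_univ_three] at hg
    simp only [Matrix.cons_val_zero, Matrix.cons_val_one, Matrix.head_cons,
      Matrix.cons_val_two, Matrix.tail_cons] at hg
    have h0 : g 0 = 0 := by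
      have := congrArg (fun x => E (E x)) hg
      simp only [map_add, map_smul, h3, smul_zero, add_zero, map_zero] at this
      exact (smul_eq_zero.mp this).resolve_right hv
    have h1 : g 1 = 0 := by
      have := congrArg E hg
      rw [h0, zero_smul, zero_add] at this
      simp only [map_add, map_smul, h3, smul_zero, add_zero, map_zero] at this
      exact (smul_eq_zero.mp this).resolve_right hv
    rw [h0, h1, zero_smul, zero_smul, zero_add, zero_add] at hg
    have h2 : g 2 = 0 := (smul_eq_zero.mp hg).resolve_right hv
    intro i; fin_cases i <;> assumption
  have hcard : Fintype.card (Fin 3) = finrank k (Fin 3 → k) := by simp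
  let b : Basis (Fin 3) k (Fin 3 → k) := basisOfLinearIndependentOfCardEqFinrank hli3 hcard
  have hb : ⇑b = ![v, E v, E (E v)] := coe_basisOfLinearIndependentOfCardEqFinrank hli3 hcard
  have hb0 : b 0 = v := by rw [hb]; rfl
  have hb1 : b 1 = E v := by rw [hb]; rfl
  have hb2 : b 2 = E (E v) := by rw [hb]; rfl
  set a := b.repr (F v) 0 with hadef
  set a1 := b.repr (F v) 1 with ha1def
  set a2 := b.repr (F v) 2 with ha2def
  have hFv : F v = a • v + a1 • E v + a2 • E (E v) := by
    have := b.sum_repr (F v)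
    rw [Fin.sum_univ_three, hb0, hb1, hb2] at this
    exact this.symm
  have hFE : ∀ u, F (E u) = E (F u) := fun u => by
    have := congrFun (congrArg DFunLike.coe hEF.symm) u
    simpa [Module.End.mul_apply] using this
  have hkey : F = a • 1 + a1 • E + a2 • (E * E) := by
    apply b.ext
    intro i
    fin_cases i
    · show F (b 0) = (a • 1 + a1 • E + a2 • (E * E)) (b 0)
      rw [hb0, hFv]
      simp [Module.End.mul_apply, LinearMap.add_apply, LinearMap.smul_apply]
    · show F (b 1) = (a • 1 + a1 • E + a2 • (E * E)) (b 1)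
      rw [hb1, hFE, hFv]
      simp [Module.End.mul_apply, LinearMap.add_apply, LinearMap.smul_apply, map_add, map_smul, h3]
    · show F (b 2) = (a • 1 + a1 • E + a2 • (E * E)) (b 2)
      rw [hb2, hFE, hFE, hFv]
      simp [Module.End.mul_apply, LinearMap.add_apply, LinearMap.smul_apply, map_add, map_smul, h3]
  have fval : f.val = a • 1 + a1 • e.val + a2 • e.val ^ 2 := by
    apply φ.injective
    rw [map_add, map_add, map_smul, map_smul, map_smul, map_one, pow_two, _root_.map_mul,
      ← hEdef, ← hFdef]
    exact hkey
  have h2k : (2:k) = 0 := by exact_mod_cast CharP.cast_eq_zero k 2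
  have tre2 : Matrix.trace (e.val ^ 2) = 0 := by
    have hn : IsNilpotent (e.val ^ 2) :=
      ⟨2, by rw [← pow_mul, show 2*2 = 3+1 by norm_num, pow_succ, he3, zero_mul]⟩
    exact (Matrix.isNilpotent_trace_of_isNilpotent hn).eq_zero
  have te : Matrix.trace e.val = 0 := e.2
  have tf : Matrix.trace f.val = 0 := f.2
  have ha : a = 0 := by
    have htr := congrArg Matrix.trace fval
    rw [tf, Matrix.trace_add, Matrix.trace_add, Matrix.trace_smul, Matrix.trace_smul,
      Matrix.trace_smul, Matrix.trace_one, te, tre2] at htr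
    have h3k : ((Fintype.card (Fin 3) : k)) = 1 := by
      rw [show Fintype.card (Fin 3) = 3 by simp]
      rw [show ((3:ℕ):k) = 2 + 1 by push_cast; ring, h2k, zero_add]
    rw [h3k] at htr
    simpa using htr.symm
  have hkey2 : F = a1 • E + a2 • (E * E) := by rw [hkey, ha, zero_smul, zero_add]
  have hHE2 : H * (E * E) - (E * E) * H = 0 := by
    have h1 : H * (E * E) - (E * E) * H = (H * E - E * H) * E + E * (H * E - E * H) := by
      rw [sub_mul, mul_sub, ← mul_assoc E H E, ← mul_assoc H E E, ← mul_assoc E E H]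
      abel
    rw [hHE] at h1
    rw [h1]
    exact charTwoAddSelf k _
  have hc2 : H * F - F * H = a1 • E := by
    have h1 : H * F - F * H
        = a1 • (H * E - E * H) + a2 • (H * (E * E) - (E * E) * H) := by
      rw [hkey2]
      rw [mul_add, add_mul, mul_smul_comm, mul_smul_comm, smul_mul_assoc, smul_mul_assoc,
        smul_sub, smul_sub]
      abel
    rw [hHE, hHE2, smul_zero, add_zero] at h1
    exact h1
  have ha2 : a2 = 0 := by
    have h1 : F = a1 • E := by rw [← hHF, hc2]
    have h2 : a2 • (E * E) = 0 := by
      have h3 := hkey2.symm.trans h1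
      rwa [add_eq_left] at h3
    rcases smul_eq_zero.mp h2 with h | h
    · exact h
    · exact absurd h hE2
  have fval2 : f.val = a1 • e.val := by
    apply φ.injective
    rw [map_smul, ← hEdef, ← hFdef, hkey2, ha2, zero_smul, add_zero]
  have hrel : a1 • e + (-1 : k) • f = 0 := by
    apply Subtype.ext
    show a1 • e.val + (-1 : k) • f.val = 0
    rw [fval2]
    module
  exact absurd (LinearIndependent.pair_iff.mp hli a1 (-1) hrel).2 (by norm_num)

open LieAlgebra.SpecialLinear Module in
lemma backward_dir (k : Type*) [Field k] [CharP k 2]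
    (e : sl (Fin 3) k) (hne : e ≠ 0) (hsq : e.val ^ 2 = 0) :
    ∃ h f : sl (Fin 3) k, LinearIndependent k ![e, f] ∧
      ⁅e, f⁆ = 0 ∧ ⁅h, e⁆ = e ∧ ⁅h, f⁆ = f := by
  classical
  have neg_eq : ∀ x : (Fin 3 → k), -x = x := fun x => by
    rw [neg_eq_iff_add_eq_zero]; exact charTwoAddSelf k x
  let φ := (Matrix.toLinAlgEquiv' : Matrix (Fin 3) (Fin 3) k ≃ₐ[k] _)
  let E := φ e.val
  have hEdef : E = φ e.val := rfl
  have hE2 : E * E = 0 := by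
    rw [hEdef, ← _root_.map_mul, ← pow_two, hsq, map_zero]
  have hEne : E ≠ 0 := by
    intro hc
    have h0 : φ e.val = φ 0 := by rw [map_zero, ← hEdef]; exact hc
    exact hne (Subtype.ext (φ.injective h0))
  obtain ⟨v, hv⟩ : ∃ v, E v ≠ 0 := by
    by_contra hc
    push_neg at hc
    exact hEne (LinearMap.ext fun u => by simpa using hc u)
  have hEEv : ∀ u, E (E u) = 0 := fun u => by
    have := congrFun (congrArg DFunLike.coe hE2) u
    simpa [Module.End.mul_apply] using this
  clear_value E
  -- find w in ker E, not in span of E v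
  obtain ⟨w, hEw, hwnot⟩ : ∃ w, E w = 0 ∧ w ∉ Submodule.span k {E v} := by
    by_contra hc
    push_neg at hc
    have hle : LinearMap.ker E ≤ Submodule.span k {E v} := fun x hx =>
      hc x (LinearMap.mem_ker.mp hx)
    have hrle : LinearMap.range E ≤ LinearMap.ker E := by
      rintro x ⟨u, rfl⟩
      exact LinearMap.mem_ker.mpr (hEEv u)
    have h1 := LinearMap.finrank_range_add_finrank_ker E
    rw [show finrank k (Fin 3 → k) = 3 by simp] at h1
    have h2 : finrank k (LinearMap.range E) ≤ finrank k (LinearMap.ker E) :=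
      Submodule.finrank_mono hrle
    have h3 : finrank k (LinearMap.ker E) ≤ finrank k (Submodule.span k {E v}) :=
      Submodule.finrank_mono hle
    rw [finrank_span_singleton hv] at h3
    omega
  -- basis (E v, v, w)
  have hli3 : LinearIndependent k ![E v, v, w] := by
    rw [Fintype.linearIndependent_iff]
    intro g hg
    rw [Fin.sum_univ_three] at hg
    simp only [Matrix.cons_val_zero, Matrix.cons_val_one, Matrix.head_cons,
      Matrix.cons_val_two, Matrix.tail_cons] at hg
    have h1 : g 1 = 0 := by
      have := congrArg E hg
      simp only [map_add, map_smul, hEEv, hEw, smul_zero, zero_add, add_zero, map_zero] at this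
      exact (smul_eq_zero.mp this).resolve_right hv
    have h2 : g 2 = 0 := by
      by_contra hg2
      apply hwnot
      have : g 2 • w = (-(g 0)) • E v := by
        rw [h1, zero_smul, add_zero] at hg
        rw [neg_smul, eq_neg_iff_add_eq_zero, add_comm]
        exact hg
      have hw : w = ((g 2)⁻¹ * (-(g 0))) • E v := by
        rw [mul_smul, ← this, ← mul_smul, inv_mul_cancel₀ hg2, one_smul]
      rw [hw]
      exact Submodule.smul_mem _ _ (Submodule.mem_span_singleton_self _)
    have h0 : g 0 = 0 := by
      rw [h1, h2, zero_smul, zero_smul, add_zero, add_zero] at hg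
      exact (smul_eq_zero.mp hg).resolve_right hv
    intro i; fin_cases i <;> assumption
  have hcard : Fintype.card (Fin 3) = finrank k (Fin 3 → k) := by simp
  let b : Basis (Fin 3) k (Fin 3 → k) := basisOfLinearIndependentOfCardEqFinrank hli3 hcard
  have hb : ⇑b = ![E v, v, w] := coe_basisOfLinearIndependentOfCardEqFinrank hli3 hcard
  have hb0 : b 0 = E v := by rw [hb]; rfl
  have hb1 : b 1 = v := by rw [hb]; rfl
  have hb2 : b 2 = w := by rw [hb]; rfl
  -- E on the basis
  have hEb0 : E (b 0) = 0 := by rw [hb0]; exact hEEv v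
  have hEb1 : E (b 1) = b 0 := by rw [hb1, hb0]
  have hEb2 : E (b 2) = 0 := by rw [hb2]; exact hEw
  -- H and F
  let H : (Fin 3 → k) →ₗ[k] (Fin 3 → k) := b.constr k ![0, b 1, b 2]
  let F : (Fin 3 → k) →ₗ[k] (Fin 3 → k) := b.constr k ![0, 0, b 0]
  have hH0 : H (b 0) = 0 := by
    show (b.constr k ![0, b 1, b 2]) (b 0) = 0
    rw [Basis.constr_basis]
    rfl
  have hH1 : H (b 1) = b 1 := by
    show (b.constr k ![0, b 1, b 2]) (b 1) = b 1
    rw [Basis.constr_basis]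
    rfl
  have hH2 : H (b 2) = b 2 := by
    show (b.constr k ![0, b 1, b 2]) (b 2) = b 2
    rw [Basis.constr_basis]
    rfl
  have hF0 : F (b 0) = 0 := by
    show (b.constr k ![0, 0, b 0]) (b 0) = 0
    rw [Basis.constr_basis]
    rfl
  have hF1 : F (b 1) = 0 := by
    show (b.constr k ![0, 0, b 0]) (b 1) = 0
    rw [Basis.constr_basis]
    rfl
  have hF2 : F (b 2) = b 0 := by
    show (b.constr k ![0, 0, b 0]) (b 2) = b 0
    rw [Basis.constr_basis]
    rfl
  clear_value H F
  -- traces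
  have trace_eq : ∀ G : (Fin 3 → k) →ₗ[k] (Fin 3 → k),
      Matrix.trace (φ.symm G) = Matrix.trace (LinearMap.toMatrix b b G) := by
    intro G
    rw [← LinearMap.trace_eq_matrix_trace k b G,
      LinearMap.trace_eq_matrix_trace k (Pi.basisFun k (Fin 3)) G,
      LinearMap.toMatrix_eq_toMatrix']
    rfl
  have h11 : (1 : k) + 1 = 0 := charTwoAddSelf k 1
  have trH : Matrix.trace (LinearMap.toMatrix b b H) = 0 := by
    simp [Matrix.trace, Fin.sum_univ_three, LinearMap.toMatrix_apply, hH0, hH1, hH2, h11]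
  have trF : Matrix.trace (LinearMap.toMatrix b b F) = 0 := by
    simp [Matrix.trace, Fin.sum_univ_three, LinearMap.toMatrix_apply, hF0, hF1, hF2,
      Finsupp.single_apply]
  refine ⟨⟨φ.symm H, ?_⟩, ⟨φ.symm F, ?_⟩, ?_, ?_, ?_, ?_⟩
  · show Matrix.trace (φ.symm H) = 0
    rw [trace_eq]; exact trH
  · show Matrix.trace (φ.symm F) = 0
    rw [trace_eq]; exact trF
  · -- linear independence
    rw [LinearIndependent.pair_iff]
    intro s t hst
    have h1 : s • e.val + t • (φ.symm F) = 0 := congrArg Subtype.val hst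
    have h2 : s • E + t • F = 0 := by
      have h3 := congrArg φ h1
      rw [map_add, map_smul, map_smul, AlgEquiv.apply_symm_apply, map_zero, ← hEdef] at h3
      exact h3
    have hb0ne : b 0 ≠ 0 := by rw [hb0]; exact hv
    have hs : s = 0 := by
      have h3 := congrFun (congrArg DFunLike.coe h2) (b 1)
      simp only [LinearMap.add_apply, LinearMap.smul_apply, LinearMap.zero_apply,
        hEb1, hF1, smul_zero, add_zero] at h3
      exact (smul_eq_zero.mp h3).resolve_right hb0ne
    have ht : t = 0 := by
      have h3 := congrFun (congrArg DFunLike.coe h2) (b 2)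
      simp only [LinearMap.add_apply, LinearMap.smul_apply, LinearMap.zero_apply,
        hEb2, hF2, smul_zero, zero_add] at h3
      exact (smul_eq_zero.mp h3).resolve_right hb0ne
    exact ⟨hs, ht⟩
  · -- ⁅e, f⁆ = 0
    apply Subtype.ext
    show e.val * (φ.symm F) - (φ.symm F) * e.val = 0
    apply φ.injective
    rw [map_sub, _root_.map_mul, _root_.map_mul, AlgEquiv.apply_symm_apply, map_zero, ← hEdef]
    refine b.ext fun i => ?_
    fin_cases i
    · show (E * F - F * E) (b 0) = (0 : (Fin 3 → k) →ₗ[k] (Fin 3 → k)) (b 0)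
      simp [LinearMap.sub_apply, Module.End.mul_apply, hEb0, hF0]
    · show (E * F - F * E) (b 1) = (0 : (Fin 3 → k) →ₗ[k] (Fin 3 → k)) (b 1)
      simp [LinearMap.sub_apply, Module.End.mul_apply, hEb1, hF1, hF0]
    · show (E * F - F * E) (b 2) = (0 : (Fin 3 → k) →ₗ[k] (Fin 3 → k)) (b 2)
      simp [LinearMap.sub_apply, Module.End.mul_apply, hEb2, hEb0, hF2]
  · -- ⁅h, e⁆ = e
    apply Subtype.ext
    show (φ.symm H) * e.val - e.val * (φ.symm H) = e.val
    apply φ.injective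
    rw [map_sub, _root_.map_mul, _root_.map_mul, AlgEquiv.apply_symm_apply, ← hEdef]
    refine b.ext fun i => ?_
    fin_cases i
    · show (H * E - E * H) (b 0) = E (b 0)
      simp [LinearMap.sub_apply, Module.End.mul_apply, hEb0, hH0]
    · show (H * E - E * H) (b 1) = E (b 1)
      simp [LinearMap.sub_apply, Module.End.mul_apply, hEb1, hH1, hH0, neg_eq]
    · show (H * E - E * H) (b 2) = E (b 2)
      simp [LinearMap.sub_apply, Module.End.mul_apply, hEb2, hH2]
  · -- ⁅h, f⁆ = f
    apply Subtype.ext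
    show (φ.symm H) * (φ.symm F) - (φ.symm F) * (φ.symm H) = (φ.symm F)
    apply φ.injective
    rw [map_sub, _root_.map_mul, _root_.map_mul, AlgEquiv.apply_symm_apply,
      AlgEquiv.apply_symm_apply]
    refine b.ext fun i => ?_
    fin_cases i
    · show (H * F - F * H) (b 0) = F (b 0)
      simp [LinearMap.sub_apply, Module.End.mul_apply, hF0, hH0]
    · show (H * F - F * H) (b 1) = F (b 1)
      simp [LinearMap.sub_apply, Module.End.mul_apply, hF1, hH1]
    · show (H * F - F * H) (b 2) = F (b 2)
      simp [LinearMap.sub_apply, Module.End.mul_apply, hF2, hH2, hH0, neg_eq]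


open LieAlgebra.SpecialLinear in
/-- A nonzero nilpotent `e ∈ sl_3(k)`, `k` algebraically closed of
characteristic 2, extends to a `pgl₂`-triple (`e, f` linearly independent, `⁅e,f⁆ = 0`,
`⁅h,e⁆ = e`, `⁅h,f⁆ = f`) iff `e² = 0`, i.e. `e` is not regular. -/
theorem stmt_11 (k : Type*) [Field k] [IsAlgClosed k] [CharP k 2]
    (e : sl (Fin 3) k) (hne : e ≠ 0) (he : IsNilpotent e.val) :
    (∃ h f : sl (Fin 3) k, LinearIndependent k ![e, f] ∧
      ⁅e, f⁆ = 0 ∧ ⁅h, e⁆ = e ∧ ⁅h, f⁆ = f) ↔ e.val ^ 2 = 0 := by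
  constructor
  · rintro ⟨h, f, hli, hef, hhe, hhf⟩
    exact forward_dir k e he h f hli hef hhe hhf
  · intro hsq
    exact backward_dir k e hne hsq
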